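/- Let ξ be a standard normal random variable, μ, ν ∈ ℝ, σ, τ > 0, and 0 < a < b. With x(c) denoting the unique real solution of c = exp(μ + σ·x) + exp(ν + τ·x) for c > 0, it holds that E[(exp(μ + σ·ξ) + exp(ν + τ·ξ))·1{a ≤ exp(μ + σ·ξ) + exp(ν + τ·ξ) < b}] = exp(μ + σ²/2)·(Φ(x(b) − σ) − Φ(x(a) − σ)) + exp(ν + τ²/2)·(Φ(x(b) − τ) − Φ(x(a) − τ)). -/
import Mathlib


open Real MeasureTheory ProbabilityTheory NNReal ENNReal

/-- The standard normal density `φ(u) = (2π)^{-1/2} exp(-u²/2)`. -/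
noncomputable def stdNormalPDF (u : ℝ) : ℝ := (Real.sqrt (2 * Real.pi))⁻¹ * Real.exp (-u ^ 2 / 2)

/-- The standard normal cumulative distribution function `Φ`. -/
noncomputable def stdNormalCDF (x : ℝ) : ℝ := ∫ u in Set.Iic x, stdNormalPDF u

lemma stdNormalPDF_eq : stdNormalPDF = gaussianPDFReal 0 1 := by
  ext x
  simp [stdNormalPDF, gaussianPDFReal]

lemma integrable_stdNormalPDF : Integrable stdNormalPDF := by
  rw [stdNormalPDF_eq]; exact integrable_gaussianPDFReal 0 1

lemma Ico_integral_stdNormalPDF {c d : ℝ} (hcd : c ≤ d) :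
    ∫ u in Set.Ico c d, stdNormalPDF u = stdNormalCDF d - stdNormalCDF c := by
  have h1 : stdNormalCDF d = stdNormalCDF c + ∫ u in Set.Ioc c d, stdNormalPDF u := by
    rw [stdNormalCDF, stdNormalCDF, ← Set.Iic_union_Ioc_eq_Iic hcd,
      setIntegral_union (Set.Iic_disjoint_Ioc le_rfl) measurableSet_Ioc
        integrable_stdNormalPDF.integrableOn integrable_stdNormalPDF.integrableOn]
  rw [h1, MeasureTheory.integral_Ico_eq_integral_Ioo, ← MeasureTheory.integral_Ioc_eq_integral_Ioo]
  ring

lemma Ico_integral_stdNormalPDF_shift {c d s : ℝ} (hcd : c ≤ d) :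
    ∫ u in Set.Ico c d, stdNormalPDF (u - s) = stdNormalCDF (d - s) - stdNormalCDF (c - s) := by
  rw [MeasureTheory.integral_Ico_eq_integral_Ioo, ← MeasureTheory.integral_Ioc_eq_integral_Ioo,
    ← intervalIntegral.integral_of_le hcd,
    intervalIntegral.integral_comp_sub_right _ s,
    intervalIntegral.integral_of_le (by linarith),
    MeasureTheory.integral_Ioc_eq_integral_Ioo, ← MeasureTheory.integral_Ico_eq_integral_Ioo]
  exact Ico_integral_stdNormalPDF (by linarith)

/-- For `ξ` standard normal, `0 < a < b`, and `xa`, `xb` the unique solutions of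
`a = exp(μ + σ·x) + exp(ν + τ·x)` and `b = exp(μ + σ·x) + exp(ν + τ·x)` respectively:
`E[(exp(μ + σ·ξ) + exp(ν + τ·ξ))·1{a ≤ exp(μ + σ·ξ) + exp(ν + τ·ξ) < b}]
  = exp(μ + σ²/2)·(Φ(xb - σ) - Φ(xa - σ)) + exp(ν + τ²/2)·(Φ(xb - τ) - Φ(xa - τ))`. -/
theorem truncated_mean_sum_lognormal (μ ν σ τ a b xa xb : ℝ) (hσ : 0 < σ) (hτ : 0 < τ)
    (ha : 0 < a) (hab : a < b)
    (hxa : a = Real.exp (μ + σ * xa) + Real.exp (ν + τ * xa))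
    (hxb : b = Real.exp (μ + σ * xb) + Real.exp (ν + τ * xb)) :
    ∫ x in {y : ℝ | a ≤ Real.exp (μ + σ * y) + Real.exp (ν + τ * y) ∧
          Real.exp (μ + σ * y) + Real.exp (ν + τ * y) < b},
        (Real.exp (μ + σ * x) + Real.exp (ν + τ * x)) ∂(gaussianReal 0 1)
      = Real.exp (μ + σ ^ 2 / 2) * (stdNormalCDF (xb - σ) - stdNormalCDF (xa - σ))
        + Real.exp (ν + τ ^ 2 / 2) * (stdNormalCDF (xb - τ) - stdNormalCDF (xa - τ)) := by
  set f : ℝ → ℝ := fun y => Real.exp (μ + σ * y) + Real.exp (ν + τ * y) with hf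
  have hmono : StrictMono f := by
    intro x y hxy
    exact add_lt_add (Real.exp_lt_exp.mpr (by nlinarith)) (Real.exp_lt_exp.mpr (by nlinarith))
  have hxab : xa < xb := by
    refine hmono.lt_iff_lt.mp ?_
    simp only [hf]
    rw [← hxa, ← hxb]
    exact hab
  have hset : {y : ℝ | a ≤ f y ∧ f y < b} = Set.Ico xa xb := by
    ext y
    simp only [Set.mem_setOf_eq, Set.mem_Ico, hxa, hxb]
    constructor
    · rintro ⟨h1, h2⟩
      exact ⟨hmono.le_iff_le.mp h1, hmono.lt_iff_lt.mp h2⟩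
    · rintro ⟨h1, h2⟩
      exact ⟨hmono.le_iff_le.mpr h1, hmono.lt_iff_lt.mpr h2⟩
  rw [show {y : ℝ | a ≤ Real.exp (μ + σ * y) + Real.exp (ν + τ * y) ∧
      Real.exp (μ + σ * y) + Real.exp (ν + τ * y) < b} = Set.Ico xa xb from hset]
  -- pass to Lebesgue integral with density
  have hdens : ∫ x in Set.Ico xa xb, f x ∂(gaussianReal 0 1)
      = ∫ x in Set.Ico xa xb, gaussianPDFReal 0 1 x • f x := by
    rw [gaussianReal_of_var_ne_zero 0 one_ne_zero]
    have hmeas : Measurable fun x => (gaussianPDFReal 0 1 x).toNNReal :=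
      (measurable_gaussianPDFReal 0 1).real_toNNReal
    have : (gaussianPDF 0 1) = fun x => ((fun x => (gaussianPDFReal 0 1 x).toNNReal) x : ℝ≥0∞) := by
      ext x; simp [gaussianPDF, ENNReal.ofReal]
    rw [this, setIntegral_withDensity_eq_setIntegral_smul hmeas _ measurableSet_Ico]
    refine setIntegral_congr_fun measurableSet_Ico fun x _ => ?_
    simp only [NNReal.smul_def, smul_eq_mul, Real.coe_toNNReal _ (gaussianPDFReal_nonneg 0 1 x)]
  rw [hdens]
  have hkey : ∀ x, gaussianPDFReal 0 1 x • f x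
      = Real.exp (μ + σ ^ 2 / 2) * stdNormalPDF (x - σ)
        + Real.exp (ν + τ ^ 2 / 2) * stdNormalPDF (x - τ) := by
    intro x
    rw [← stdNormalPDF_eq]
    simp only [smul_eq_mul, stdNormalPDF, hf]
    rw [mul_add]
    congr 1
    · have h : -x ^ 2 / 2 + (μ + σ * x) = μ + σ ^ 2 / 2 + -(x - σ) ^ 2 / 2 := by ring
      rw [mul_assoc, ← Real.exp_add, h, Real.exp_add]
      ring
    · have h : -x ^ 2 / 2 + (ν + τ * x) = ν + τ ^ 2 / 2 + -(x - τ) ^ 2 / 2 := by ring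
      rw [mul_assoc, ← Real.exp_add, h, Real.exp_add]
      ring
  simp only [hkey]
  have hint : ∀ c s : ℝ, IntegrableOn (fun x => c * stdNormalPDF (x - s)) (Set.Ico xa xb) := by
    intro c s
    exact (((integrable_stdNormalPDF.comp_sub_right s).const_mul c).integrableOn)
  rw [MeasureTheory.integral_add (hint _ σ) (hint _ τ),
    MeasureTheory.integral_const_mul, MeasureTheory.integral_const_mul,
    Ico_integral_stdNormalPDF_shift hxab.le, Ico_integral_stdNormalPDF_shift hxab.le]
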